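/- Let the characteristic of K be zero. If π ∈ K[T] is an irreducible polynomial dividing L_n, then for every m ≥ 1 one has ord_π(L_{mn}) = ord_π(L_n). -/

import Mathlib

/-- Lemma 2.5 (characteristic zero): if `π` is an irreducible dividing `L_n`, then
for every `m ≥ 1` one has `ord_π (L_{mn}) = ord_π (L_n)`. -/
theorem stmt_18 {K : Type*} [Field K] [CharZero K]
    (σ : K ≃+* K) (hσ : ∀ x, σ (σ x) = x)
    (P : Polynomial K) (hP : P ≠ 0)
    (Pσ : Polynomial K) (hPσ : Pσ = P.map (σ : K →+* K))
    (hne : P ≠ Pσ) (hcop : IsCoprime (P + Pσ) (P * Pσ))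
    (L : ℕ → Polynomial K)
    (hL : ∀ n, L n = ∑ i ∈ Finset.range n, P ^ i * Pσ ^ (n - 1 - i))
    (π : Polynomial K) (hπ : Irreducible π)
    (n : ℕ) (hn : 1 ≤ n) (hdvd : π ∣ L n) :
    ∀ m : ℕ, 1 ≤ m → multiplicity π (L (m * n)) = multiplicity π (L n) := by
  intro m hm
  have key : ∀ k, L k * (P - Pσ) = P ^ k - Pσ ^ k := fun k => by
    rw [hL k]; exact geom_sum₂_mul P Pσ k
  have hPPσ : P - Pσ ≠ 0 := sub_ne_zero.mpr hne
  set S : Polynomial K := ∑ j ∈ Finset.range m, (P ^ n) ^ j * (Pσ ^ n) ^ (m - 1 - j) with hS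
  have hfact : L (m * n) = L n * S := by
    apply mul_right_cancel₀ hPPσ
    rw [key, mul_comm (L n), mul_assoc, key]
    rw [hS, mul_comm m n, pow_mul, pow_mul]
    exact (geom_sum₂_mul (P ^ n) (Pσ ^ n) m).symm
  by_cases hLn : L n = 0
  · have h0 : P ^ n = Pσ ^ n := by
      have := key n; rw [hLn, zero_mul] at this
      exact (sub_eq_zero.mp this.symm)
    have hz : L (m * n) = 0 := by
      apply mul_right_cancel₀ hPPσ
      rw [key, zero_mul, mul_comm m n, pow_mul, pow_mul, h0, sub_self]
    rw [hz, hLn]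
  · obtain ⟨k, rfl⟩ : ∃ k, n = k + 1 := ⟨n - 1, by omega⟩
    have hprime : Prime π := hπ.prime
    have hπP : ¬ π ∣ P := by
      intro hd
      have h1 : P ∣ L (k + 1) - Pσ ^ k := by
        rw [hL, Finset.sum_range_succ']
        simp only [pow_zero, one_mul, Nat.add_sub_cancel, Nat.sub_zero]
        rw [add_sub_cancel_right]
        exact Finset.dvd_sum fun i _ =>
          dvd_mul_of_dvd_left (dvd_pow_self P (Nat.succ_ne_zero i)) _
      have h2 : π ∣ Pσ ^ k := (dvd_sub_right hdvd).mp (hd.trans h1)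
      rcases Nat.eq_zero_or_pos k with rfl | hk
      · exact hπ.not_isUnit (isUnit_of_dvd_one (by simpa using h2))
      · have h3 : π ∣ Pσ := hprime.dvd_of_dvd_pow h2
        exact hπ.not_isUnit (hcop.isUnit_of_dvd' (dvd_add hd h3) (hd.mul_right Pσ))
    have hπPσ : ¬ π ∣ Pσ := by
      intro hd
      have h1 : Pσ ∣ L (k + 1) - P ^ k := by
        rw [hL, Finset.sum_range_succ]
        simp only [Nat.add_sub_cancel, Nat.sub_self, pow_zero, mul_one]
        rw [add_sub_cancel_right]
        refine Finset.dvd_sum fun i hi => dvd_mul_of_dvd_right (dvd_pow_self Pσ ?_) _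
        have := Finset.mem_range.mp hi; omega
      have h2 : π ∣ P ^ k := (dvd_sub_right hdvd).mp (hd.trans h1)
      rcases Nat.eq_zero_or_pos k with rfl | hk
      · exact hπ.not_isUnit (isUnit_of_dvd_one (by simpa using h2))
      · have h3 : π ∣ P := hprime.dvd_of_dvd_pow h2
        exact hπ.not_isUnit (hcop.isUnit_of_dvd' (dvd_add h3 hd) (h3.mul_right Pσ))
    have hπn : π ∣ Pσ ^ (k + 1) - P ^ (k + 1) := by
      have : π ∣ P ^ (k + 1) - Pσ ^ (k + 1) := by rw [← key]; exact hdvd.mul_right _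
      rw [← neg_sub]; exact dvd_neg.mpr this
    have hπS : ¬ π ∣ S := by
      intro hd
      have hconst : (m : Polynomial K) * (P ^ (k + 1)) ^ (m - 1)
          = ∑ _j ∈ Finset.range m, (P ^ (k + 1)) ^ (m - 1) := by
        rw [Finset.sum_const, Finset.card_range, nsmul_eq_mul]
      have hdiff : π ∣ S - (m : Polynomial K) * (P ^ (k + 1)) ^ (m - 1) := by
        rw [hconst, hS, ← Finset.sum_sub_distrib]
        refine Finset.dvd_sum fun j hj => ?_
        have hj' : j + (m - 1 - j) = m - 1 := by
          have := Finset.mem_range.mp hj; omega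
        have e : (P ^ (k + 1)) ^ j * (Pσ ^ (k + 1)) ^ (m - 1 - j) - (P ^ (k + 1)) ^ (m - 1)
            = (P ^ (k + 1)) ^ j *
              ((Pσ ^ (k + 1)) ^ (m - 1 - j) - (P ^ (k + 1)) ^ (m - 1 - j)) := by
          have e2 : (P ^ (k + 1)) ^ (m - 1) = (P ^ (k + 1)) ^ j * (P ^ (k + 1)) ^ (m - 1 - j) := by
            rw [← pow_add, hj']
          rw [e2]; ring
        rw [e]
        exact Dvd.dvd.mul_left
          (hπn.trans (sub_dvd_pow_sub_pow (Pσ ^ (k + 1)) (P ^ (k + 1)) (m - 1 - j))) _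
      have h4 : π ∣ (m : Polynomial K) * (P ^ (k + 1)) ^ (m - 1) :=
        (dvd_sub_right hd).mp hdiff
      have hmunit : IsUnit (m : Polynomial K) := by
        rw [← Polynomial.C_eq_natCast]
        exact Polynomial.isUnit_C.mpr
          (isUnit_iff_ne_zero.mpr (Nat.cast_ne_zero.mpr (by omega)))
      have h5 : π ∣ (P ^ (k + 1)) ^ (m - 1) :=
        (hprime.dvd_mul.mp h4).resolve_left
          (fun h => hπ.not_isUnit (isUnit_of_dvd_unit h hmunit))
      exact hπP (hprime.dvd_of_dvd_pow (hprime.dvd_of_dvd_pow h5))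
    have hSne : S ≠ 0 := fun h => hπS (h ▸ dvd_zero π)
    have hfin : FiniteMultiplicity π (L (k + 1) * S) :=
      FiniteMultiplicity.of_not_isUnit hπ.not_isUnit (mul_ne_zero hLn hSne)
    rw [hfact, multiplicity_mul hprime hfin, multiplicity_eq_zero.mpr hπS, add_zero]
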